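/- Let v₀, …, v_d be affinely independent points of ℝ^d with convex hull S, let f : ℝ^d → ℝ, and let f_l be the linear interpolant of f on S. Suppose f is Lipschitz with constant λ ≥ 0 on S, and suppose S is contained in a closed ball of radius ρ (centered at some point c ∈ ℝ^d). Then |f(s) − f_l(s)| ≤ λρ for all s ∈ S. -/

import Mathlib

/-- Case (ii) of the paper's Proposition 1: if `f` is Lipschitz with constant `L` on the
simplex `S = conv{v₀, …, v_d}` and `S` is contained in a closed ball of radius `ρ`, then
the linear interpolation error is at most `L ρ` on `S`. -/
theorem interpolation_error_le_lipschitz_radius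
    (d : ℕ) (v : Fin (d + 1) → EuclideanSpace ℝ (Fin d))
    (hv : AffineIndependent ℝ v)
    (f : EuclideanSpace ℝ (Fin d) → ℝ)
    (L : ℝ) (hL : 0 ≤ L)
    (hlip : ∀ x ∈ convexHull ℝ (Set.range v), ∀ y ∈ convexHull ℝ (Set.range v),
      |f x - f y| ≤ L * ‖x - y‖)
    (fl : EuclideanSpace ℝ (Fin d) →ᵃ[ℝ] ℝ)
    (hfl : ∀ i, fl (v i) = f (v i))
    (c : EuclideanSpace ℝ (Fin d)) (ρ : ℝ)
    (hball : convexHull ℝ (Set.range v) ⊆ Metric.closedBall c ρ) :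
    ∀ s ∈ convexHull ℝ (Set.range v), |f s - fl s| ≤ L * ρ := by
  intro s hs
  have hρ : 0 ≤ ρ := by
    have h1 := hball hs
    rw [Metric.mem_closedBall] at h1
    exact le_trans dist_nonneg h1
  have hvmem : ∀ i, v i ∈ convexHull ℝ (Set.range v) := fun i =>
    subset_convexHull _ _ ⟨i, rfl⟩
  have hs' := hs
  rw [convexHull_range_eq_exists_affineCombination] at hs'
  obtain ⟨t, w, hw0, hw1, hsc⟩ := hs'
  have hsum : s = ∑ i ∈ t, w i • v i := by
    rw [← hsc, Finset.affineCombination_eq_linear_combination _ _ _ hw1]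
  have hflv : fl s = ∑ i ∈ t, w i * f (v i) := by
    rw [← hsc, Finset.map_affineCombination t v w hw1,
      Finset.affineCombination_eq_linear_combination _ _ _ hw1]
    simp [hfl]
  -- variance identity
  have hvar : ∑ i ∈ t, w i * ‖s - v i‖ ^ 2 = (∑ i ∈ t, w i * ‖v i - c‖ ^ 2) - ‖s - c‖ ^ 2 := by
    have hexp : ∀ i, ‖s - v i‖ ^ 2
        = ‖v i - c‖ ^ 2 - 2 * inner ℝ (v i - c) (s - c) + ‖s - c‖ ^ 2 := by
      intro i
      have : s - v i = -((v i - c) - (s - c)) := by abel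
      rw [this, norm_neg, @norm_sub_sq_real (EuclideanSpace ℝ (Fin d))]
    have hcomb : ∑ i ∈ t, w i • (v i - c) = s - c := by
      simp only [smul_sub, Finset.sum_sub_distrib, ← Finset.sum_smul, hw1, one_smul, ← hsum]
    calc ∑ i ∈ t, w i * ‖s - v i‖ ^ 2
        = ∑ i ∈ t, (w i * ‖v i - c‖ ^ 2
            - 2 * inner ℝ (w i • (v i - c)) (s - c) + w i * ‖s - c‖ ^ 2) := by
          refine Finset.sum_congr rfl fun i _ => ?_
          rw [hexp i, real_inner_smul_left]; ring
      _ = (∑ i ∈ t, w i * ‖v i - c‖ ^ 2) - 2 * inner ℝ (∑ i ∈ t, w i • (v i - c)) (s - c)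
            + (∑ i ∈ t, w i) * ‖s - c‖ ^ 2 := by
          rw [Finset.sum_add_distrib, Finset.sum_sub_distrib, sum_inner, ← Finset.sum_mul,
            Finset.mul_sum]
      _ = (∑ i ∈ t, w i * ‖v i - c‖ ^ 2) - ‖s - c‖ ^ 2 := by
          rw [hcomb, hw1, real_inner_self_eq_norm_sq]; ring
  have hvarle : ∑ i ∈ t, w i * ‖s - v i‖ ^ 2 ≤ ρ ^ 2 := by
    rw [hvar]
    have h1 : ∑ i ∈ t, w i * ‖v i - c‖ ^ 2 ≤ ∑ i ∈ t, w i * ρ ^ 2 := by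
      refine Finset.sum_le_sum fun i hi => ?_
      have hb : ‖v i - c‖ ≤ ρ := by
        have := hball (hvmem i)
        rwa [Metric.mem_closedBall, dist_eq_norm] at this
      exact mul_le_mul_of_nonneg_left (by nlinarith [norm_nonneg (v i - c)]) (hw0 i hi)
    rw [← Finset.sum_mul, hw1, one_mul] at h1
    nlinarith [sq_nonneg ‖s - c‖]
  -- Cauchy–Schwarz: (∑ w‖s-v‖)² ≤ (∑ w)(∑ w‖s-v‖²)
  have hCS : (∑ i ∈ t, w i * ‖s - v i‖) ^ 2 ≤ ∑ i ∈ t, w i * ‖s - v i‖ ^ 2 := by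
    have hcs := Finset.sum_mul_sq_le_sq_mul_sq t (fun i => Real.sqrt (w i))
      (fun i => Real.sqrt (w i) * ‖s - v i‖)
    have e1 : ∀ i ∈ t, Real.sqrt (w i) * (Real.sqrt (w i) * ‖s - v i‖) = w i * ‖s - v i‖ := by
      intro i hi
      rw [← mul_assoc, Real.mul_self_sqrt (hw0 i hi)]
    have e2 : ∀ i ∈ t, Real.sqrt (w i) ^ 2 = w i := fun i hi => Real.sq_sqrt (hw0 i hi)
    have e3 : ∀ i ∈ t, (Real.sqrt (w i) * ‖s - v i‖) ^ 2 = w i * ‖s - v i‖ ^ 2 := by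
      intro i hi
      rw [mul_pow, Real.sq_sqrt (hw0 i hi)]
    rw [Finset.sum_congr rfl e1, Finset.sum_congr rfl e2, Finset.sum_congr rfl e3, hw1,
      one_mul] at hcs
    exact hcs
  have hwnorm : ∑ i ∈ t, w i * ‖s - v i‖ ≤ ρ := by
    have h0 : 0 ≤ ∑ i ∈ t, w i * ‖s - v i‖ :=
      Finset.sum_nonneg fun i hi => mul_nonneg (hw0 i hi) (norm_nonneg _)
    nlinarith [hCS.trans hvarle]
  calc |f s - fl s| = |∑ i ∈ t, w i * (f s - f (v i))| := by
        rw [hflv]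
        congr 1
        simp only [mul_sub]
        rw [Finset.sum_sub_distrib, ← Finset.sum_mul, hw1, one_mul]
    _ ≤ ∑ i ∈ t, w i * (L * ‖s - v i‖) := by
        refine (Finset.abs_sum_le_sum_abs _ _).trans (Finset.sum_le_sum fun i hi => ?_)
        rw [abs_mul, abs_of_nonneg (hw0 i hi)]
        exact mul_le_mul_of_nonneg_left (hlip s hs _ (hvmem i)) (hw0 i hi)
    _ = L * ∑ i ∈ t, w i * ‖s - v i‖ := by
        rw [Finset.mul_sum]; exact Finset.sum_congr rfl fun i _ => by ring
    _ ≤ L * ρ := mul_le_mul_of_nonneg_left hwnorm hL
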